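/- Let n, k ∈ ℕ, let f ∈ ℝ[X]_{2k} be a sum of squares of k-forms, let I be the ideal of ℝ[X₁,…,Xₙ] generated by sosupp f, and let I_{2k} = I ∩ ℝ[X]_{2k}. Let C be the image of the set of sums of squares of elements of ℝ[X]_k under the quotient map ℝ[X]_{2k} → ℝ[X]_{2k}/I_{2k} (the quotient carrying its canonical topology as a finite-dimensional real vector space). If C is closed and C ∩ (−C) = {0}, then the linear span of C_f equals {L : ℝ[X]_{2k} → ℝ linear : L vanishes on I_{2k}}. -/

import Mathlib

open MvPolynomial

/-- `f` is a sum of squares of `k`-forms in `n` variables. -/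
def IsSOSkForms (n k : ℕ) (f : MvPolynomial (Fin n) ℝ) : Prop :=
  ∃ (N : ℕ) (p : Fin N → MvPolynomial (Fin n) ℝ),
    (∀ i, (p i).IsHomogeneous k) ∧ f = ∑ i, (p i) ^ 2

/-- The Sum-of-Squares support of `f`. -/
def sosupp (n k : ℕ) (f : MvPolynomial (Fin n) ℝ) : Set (MvPolynomial (Fin n) ℝ) :=
  {p | p.IsHomogeneous k ∧ ∃ lam : ℝ, 0 < lam ∧ IsSOSkForms n k (f - lam • p ^ 2)}

/-- `C_f`: the set of linear functionals `E` on `ℝ[X]_{2k}` with `E(h²) ≥ 0` for all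
`k`-forms `h` and `E(f) = 0`. -/
def Cf (n k : ℕ) (f : MvPolynomial (Fin n) ℝ) :
    Set (homogeneousSubmodule (Fin n) ℝ (2 * k) →ₗ[ℝ] ℝ) :=
  {E | (∀ h : MvPolynomial (Fin n) ℝ, h.IsHomogeneous k →
          ∀ x : homogeneousSubmodule (Fin n) ℝ (2 * k),
            (x : MvPolynomial (Fin n) ℝ) = h ^ 2 → 0 ≤ E x) ∧
       ∀ x : homogeneousSubmodule (Fin n) ℝ (2 * k),
         (x : MvPolynomial (Fin n) ℝ) = f → E x = 0}

/-- The submodule `I_{2k} = I ∩ ℝ[X]_{2k}` of the space `ℝ[X]_{2k}` of `2k`-forms. -/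
noncomputable def idealPart (n k : ℕ) (I : Ideal (MvPolynomial (Fin n) ℝ)) :
    Submodule ℝ (homogeneousSubmodule (Fin n) ℝ (2 * k)) :=
  Submodule.comap (homogeneousSubmodule (Fin n) ℝ (2 * k)).subtype (I.restrictScalars ℝ)

/-- The image, in the quotient `ℝ[X]_{2k} / I_{2k}`, of the set of sums of squares
of `k`-forms. -/
noncomputable def sosImage (n k : ℕ) (I : Ideal (MvPolynomial (Fin n) ℝ)) :
    Set (homogeneousSubmodule (Fin n) ℝ (2 * k) ⧸ idealPart n k I) :=
  (idealPart n k I).mkQ ''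
    {x | ∃ (N : ℕ) (p : Fin N → MvPolynomial (Fin n) ℝ),
      (∀ i, (p i).IsHomogeneous k) ∧ (x : MvPolynomial (Fin n) ℝ) = ∑ i, p i ^ 2}

namespace Stmt9Aux

lemma hcomp {σ : Type*} {d : ℕ} {p : MvPolynomial σ ℝ} (hp : p.IsHomogeneous d)
    (m : ℕ) (g : MvPolynomial σ ℝ) :
    homogeneousComponent (m + d) (g * p) = homogeneousComponent m g * p := by
  induction g using MvPolynomial.induction_on' with
  | monomial u a =>
      have h1 : (monomial u a * p).IsHomogeneous (u.degree + d) :=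
        (isHomogeneous_monomial a rfl).mul hp
      have h2 : (monomial u a).IsHomogeneous u.degree := isHomogeneous_monomial a rfl
      rw [homogeneousComponent_of_mem ((mem_homogeneousSubmodule _ _).2 h1),
          homogeneousComponent_of_mem ((mem_homogeneousSubmodule _ _).2 h2)]
      by_cases h : m = u.degree
      · simp [h]
      · rw [if_neg (fun hc => h (by omega)), if_neg h, zero_mul]
  | add q r hq hr =>
      rw [add_mul, map_add, map_add, add_mul, hq, hr]

variable {n k : ℕ} {f : MvPolynomial (Fin n) ℝ}

lemma sq_mem {h : MvPolynomial (Fin n) ℝ} (hh : h.IsHomogeneous k) :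
    h ^ 2 ∈ homogeneousSubmodule (Fin n) ℝ (2 * k) := by
  rw [mem_homogeneousSubmodule]
  simpa [mul_comm] using hh.pow 2

lemma E_nonneg_sos {E : homogeneousSubmodule (Fin n) ℝ (2 * k) →ₗ[ℝ] ℝ} (hE : E ∈ Cf n k f)
    (x : homogeneousSubmodule (Fin n) ℝ (2 * k))
    {N : ℕ} {p : Fin N → MvPolynomial (Fin n) ℝ} (hp : ∀ i, (p i).IsHomogeneous k)
    (hx : (x : MvPolynomial (Fin n) ℝ) = ∑ i, p i ^ 2) : 0 ≤ E x := by
  have hxe : x = ∑ i, (⟨p i ^ 2, sq_mem (hp i)⟩ : homogeneousSubmodule (Fin n) ℝ (2 * k)) := by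
    apply Subtype.ext
    push_cast
    exact hx
  rw [hxe, map_sum]
  exact Finset.sum_nonneg fun i _ => hE.1 (p i) (hp i) _ rfl

lemma E_sq_zero {E : homogeneousSubmodule (Fin n) ℝ (2 * k) →ₗ[ℝ] ℝ} (hE : E ∈ Cf n k f)
    (hf : f.IsHomogeneous (2 * k)) {p : MvPolynomial (Fin n) ℝ} (hp : p ∈ sosupp n k f) :
    E ⟨p ^ 2, sq_mem hp.1⟩ = 0 := by
  obtain ⟨hpk, lam, hlam, N, r, hr, heq⟩ := hp
  set xf : homogeneousSubmodule (Fin n) ℝ (2 * k) := ⟨f, (mem_homogeneousSubmodule _ _).2 hf⟩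
  have hEf : E xf = 0 := hE.2 xf rfl
  have h1 : 0 ≤ E (xf - lam • ⟨p ^ 2, sq_mem hpk⟩) := by
    apply E_nonneg_sos hE _ hr
    push_cast
    exact heq
  have h2 : 0 ≤ E ⟨p ^ 2, sq_mem hpk⟩ := hE.1 p hpk _ rfl
  rw [map_sub, map_smul, hEf, smul_eq_mul, zero_sub] at h1
  nlinarith

lemma mul_mem {q p : MvPolynomial (Fin n) ℝ} (hq : q.IsHomogeneous k) (hp : p.IsHomogeneous k) :
    q * p ∈ homogeneousSubmodule (Fin n) ℝ (2 * k) := by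
  rw [mem_homogeneousSubmodule, two_mul]
  exact hq.mul hp

lemma E_mul_zero {E : homogeneousSubmodule (Fin n) ℝ (2 * k) →ₗ[ℝ] ℝ} (hE : E ∈ Cf n k f)
    (hf : f.IsHomogeneous (2 * k)) {p : MvPolynomial (Fin n) ℝ} (hp : p ∈ sosupp n k f)
    {q : MvPolynomial (Fin n) ℝ} (hq : q.IsHomogeneous k) :
    E ⟨q * p, mul_mem hq hp.1⟩ = 0 := by
  set a := E ⟨q * p, mul_mem hq hp.1⟩ with ha
  set b := E ⟨q ^ 2, sq_mem hq⟩ with hb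
  have hpz : E ⟨p ^ 2, sq_mem hp.1⟩ = 0 := E_sq_zero hE hf hp
  have key : ∀ t : ℝ, 0 ≤ b + 2 * t * a := by
    intro t
    have hqt : (q + t • p).IsHomogeneous k := by
      rw [smul_eq_C_mul]
      exact hq.add (hp.1.C_mul t)
    have hsq : (⟨(q + t • p) ^ 2, sq_mem hqt⟩ : homogeneousSubmodule (Fin n) ℝ (2 * k)) =
        ⟨q ^ 2, sq_mem hq⟩ + (2 * t) • ⟨q * p, mul_mem hq hp.1⟩ +
          (t ^ 2) • ⟨p ^ 2, sq_mem hp.1⟩ := by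
      apply Subtype.ext
      push_cast
      simp only [smul_eq_C_mul, map_mul, map_pow, map_ofNat]
      ring
    have h0 : 0 ≤ E ⟨(q + t • p) ^ 2, sq_mem hqt⟩ := hE.1 _ hqt _ rfl
    rw [hsq, map_add, map_add, map_smul, map_smul, smul_eq_mul, smul_eq_mul, hpz,
      mul_zero, add_zero] at h0
    linarith [h0]
  rcases eq_or_ne a 0 with h | h
  · exact h
  · exfalso
    have h2 := key (-(b + 1) / (2 * a))
    have : 2 * (-(b + 1) / (2 * a)) * a = -(b + 1) := by field_simp
    rw [this] at h2
    linarith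

lemma E_vanish {E : homogeneousSubmodule (Fin n) ℝ (2 * k) →ₗ[ℝ] ℝ} (hE : E ∈ Cf n k f)
    (hf : f.IsHomogeneous (2 * k)) (x : homogeneousSubmodule (Fin n) ℝ (2 * k))
    (hx : (x : MvPolynomial (Fin n) ℝ) ∈ Ideal.span (sosupp n k f)) : E x = 0 := by
  classical
  rw [Ideal.span, Submodule.mem_span_set'] at hx
  obtain ⟨N, c, g, hsum⟩ := hx
  have hxc : (x : MvPolynomial (Fin n) ℝ) =
      ∑ i, homogeneousComponent k (c i) * (g i : MvPolynomial (Fin n) ℝ) := by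
    have h1 := congrArg (homogeneousComponent (2 * k)) hsum
    rw [map_sum] at h1
    rw [homogeneousComponent_of_mem x.2, if_pos rfl] at h1
    rw [← h1]
    apply Finset.sum_congr rfl
    intro i _
    rw [smul_eq_mul, two_mul, hcomp (g i).2.1]
  have hxe : x = ∑ i, (⟨homogeneousComponent k (c i) * (g i : MvPolynomial (Fin n) ℝ),
      mul_mem (homogeneousComponent_isHomogeneous k (c i)) (g i).2.1⟩ :
        homogeneousSubmodule (Fin n) ℝ (2 * k)) := by
    apply Subtype.ext
    push_cast
    exact hxc
  rw [hxe, map_sum]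
  apply Finset.sum_eq_zero
  intro i _
  exact E_mul_zero hE hf (g i).2 (homogeneousComponent_isHomogeneous k (c i))

lemma summand_mem_sosupp {N : ℕ} {p : Fin N → MvPolynomial (Fin n) ℝ}
    (hp : ∀ i, (p i).IsHomogeneous k) (hfs : f = ∑ i, p i ^ 2) (i : Fin N) :
    p i ∈ sosupp n k f := by
  classical
  refine ⟨hp i, 1, one_pos, N, fun j => if j = i then 0 else p j, fun j => ?_, ?_⟩
  · by_cases h : j = i <;> simp [h, hp j, isHomogeneous_zero]
  · rw [hfs, one_smul]
    rw [← Finset.sum_erase_add Finset.univ (fun j => p j ^ 2) (Finset.mem_univ i)]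
    rw [← Finset.sum_erase_add Finset.univ
      (fun j => (if j = i then 0 else p j) ^ 2) (Finset.mem_univ i)]
    simp only [if_pos rfl, if_true]
    rw [zero_pow (two_ne_zero), add_zero, add_sub_cancel_right]
    exact (Finset.sum_congr rfl fun j hj => by
      rw [if_neg (Finset.ne_of_mem_erase hj)]).symm

lemma f_mem_span (hsos : IsSOSkForms n k f) : f ∈ Ideal.span (sosupp n k f) := by
  obtain ⟨N, p, hp, hfs⟩ := hsos
  have : ∑ i, p i ^ 2 ∈ Ideal.span (sosupp n k f) := by
    apply Ideal.sum_mem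
    intro i _
    rw [sq]
    exact Ideal.mul_mem_left _ _ (Ideal.subset_span (summand_mem_sosupp hp hfs i))
  rwa [← hfs] at this

open Module in
lemma span_dual_eq_top {Q : Type*} [AddCommGroup Q] [Module ℝ Q] [FiniteDimensional ℝ Q]
    (C : Set Q) (h0 : (0 : Q) ∈ C)
    (hsmul : ∀ (c : ℝ), 0 < c → ∀ x ∈ C, c • x ∈ C)
    (hadd : ∀ x ∈ C, ∀ y ∈ C, x + y ∈ C)
    (hclosed : @IsClosed Q (moduleTopology ℝ Q) C)
    (hpointed : C ∩ (-C) = {0}) :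
    Submodule.span ℝ {φ : Module.Dual ℝ Q | ∀ c ∈ C, 0 ≤ φ c} = ⊤ := by
  classical
  set D : Set (Module.Dual ℝ Q) := {φ | ∀ c ∈ C, 0 ≤ φ c} with hD
  letI tQ : TopologicalSpace Q := moduleTopology ℝ Q
  haveI : IsModuleTopology ℝ Q := ⟨rfl⟩
  haveI : ContinuousAdd Q := IsModuleTopology.toContinuousAdd ℝ Q
  haveI : IsTopologicalAddGroup Q :=
    { continuous_neg := IsModuleTopology.continuous_neg ℝ Q }
  set d := Module.finrank ℝ Q with hd
  let g : Q ≃ₗ[ℝ] EuclideanSpace ℝ (Fin d) :=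
    (Module.finBasis ℝ Q).equivFun.trans
      (EuclideanSpace.equiv (Fin d) ℝ).symm.toLinearEquiv
  have hgc : Continuous g := IsModuleTopology.continuous_of_linearMap g.toLinearMap
  have hgsym : Continuous g.symm := LinearMap.continuous_of_finiteDimensional g.symm.toLinearMap
  let K : ConvexCone ℝ (EuclideanSpace ℝ (Fin d)) :=
    { carrier := g '' C
      smul_mem' := by
        rintro c hc x ⟨y, hy, rfl⟩
        exact ⟨c • y, hsmul c hc y hy, map_smul g c y⟩
      add_mem' := by
        rintro x ⟨y, hy, rfl⟩ x' ⟨y', hy', rfl⟩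
        exact ⟨y + y', hadd y hy y' hy', map_add g y y'⟩ }
  have hKne : (K : Set (EuclideanSpace ℝ (Fin d))).Nonempty := ⟨g 0, Set.mem_image_of_mem g h0⟩
  have hKclosed : IsClosed (K : Set (EuclideanSpace ℝ (Fin d))) := by
    have : (K : Set (EuclideanSpace ℝ (Fin d))) = g.symm ⁻¹' C := by
      ext z
      constructor
      · rintro ⟨y, hy, rfl⟩
        simpa using hy
      · intro hz
        exact ⟨g.symm z, hz, by simp⟩
    rw [this]
    exact hclosed.preimage hgsym
  have key : ∀ z : Q, (∀ φ ∈ D, φ z = 0) → z ∈ C := by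
    intro z hz
    by_contra hzC
    have hgz : g z ∉ K := by
      intro ⟨y, hy, hgy⟩
      exact hzC (g.injective hgy ▸ hy)
    let P : ProperCone ℝ (EuclideanSpace ℝ (Fin d)) :=
      { carrier := g '' C
        add_mem' := fun {a b} ha hb => K.add_mem' ha hb
        zero_mem' := ⟨0, h0, map_zero g⟩
        smul_mem' := by
          rintro c x ⟨y, hy, rfl⟩
          refine ⟨(c : ℝ) • y, ?_, by rw [map_smul]; rfl⟩
          rcases (c.2 : (0 : ℝ) ≤ c).eq_or_lt with hc | hc
          · rw [← hc, zero_smul]; exact h0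
          · exact hsmul c hc y hy
        isClosed' := hKclosed }
    obtain ⟨y, hy1, hy2⟩ :=
      P.hyperplane_separation' (show g z ∉ P from hgz)
    have hφD : ((innerSL ℝ y).toLinearMap.comp g.toLinearMap : Module.Dual ℝ Q) ∈ D := by
      intro c hc
      have h := hy1 (g c) (Set.mem_image_of_mem g hc)
      rw [real_inner_comm] at h
      simpa using h
    have := hz _ hφD
    simp only [LinearMap.comp_apply, ContinuousLinearMap.coe_coe, innerSL_apply_apply] at this
    exact absurd this (ne_of_lt (by rwa [real_inner_comm] at hy2))
  have hco : (Submodule.span ℝ D).dualCoannihilator = ⊥ := by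
    rw [Submodule.eq_bot_iff]
    intro z hz
    rw [Submodule.mem_dualCoannihilator] at hz
    have hzD : ∀ φ ∈ D, φ z = 0 := fun φ hφ => hz φ (Submodule.subset_span hφ)
    have h1 : z ∈ C := key z hzD
    have h2 : -z ∈ C := key (-z) (fun φ hφ => by rw [map_neg, hzD φ hφ, neg_zero])
    have : z ∈ C ∩ (-C) := ⟨h1, by simpa using h2⟩
    rw [hpointed] at this
    exact this
  have hfr := Subspace.finrank_add_finrank_dualCoannihilator_eq (Submodule.span ℝ D)
  rw [hco, finrank_bot] at hfr
  apply Submodule.eq_top_of_finrank_eq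
  rw [Subspace.dual_finrank_eq]
  omega

lemma findim_homog (n m : ℕ) : FiniteDimensional ℝ (homogeneousSubmodule (Fin n) ℝ m) := by
  have hle : homogeneousSubmodule (Fin n) ℝ m ≤ restrictTotalDegree (Fin n) ℝ m := by
    intro p hp
    rw [MvPolynomial.mem_restrictTotalDegree]
    exact ((MvPolynomial.mem_homogeneousSubmodule _ _).1 hp).totalDegree_le
  exact Submodule.finiteDimensional_of_le hle

end Stmt9Aux

theorem stmt9 (n k : ℕ) (f : MvPolynomial (Fin n) ℝ) (hf : f.IsHomogeneous (2 * k))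
    (hsos : IsSOSkForms n k f)
    (hclosed : @IsClosed _ (moduleTopology ℝ _)
      (sosImage n k (Ideal.span (sosupp n k f))))
    (hpointed : sosImage n k (Ideal.span (sosupp n k f)) ∩
        (-(sosImage n k (Ideal.span (sosupp n k f)))) = {0}) :
    (Submodule.span ℝ (Cf n k f) : Set (homogeneousSubmodule (Fin n) ℝ (2 * k) →ₗ[ℝ] ℝ)) =
      {L | ∀ x : homogeneousSubmodule (Fin n) ℝ (2 * k),
        (x : MvPolynomial (Fin n) ℝ) ∈ Ideal.span (sosupp n k f) → L x = 0} := by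
  classical
  haveI : FiniteDimensional ℝ (homogeneousSubmodule (Fin n) ℝ (2 * k)) := Stmt9Aux.findim_homog n (2 * k)
  set I := Ideal.span (sosupp n k f) with hI
  set W := idealPart n k I with hWdef
  have hWmem : ∀ x : homogeneousSubmodule (Fin n) ℝ (2 * k),
      x ∈ W ↔ (x : MvPolynomial (Fin n) ℝ) ∈ I := fun x => Iff.rfl
  have hfI : f ∈ I := Stmt9Aux.f_mem_span hsos
  have hset : {L : homogeneousSubmodule (Fin n) ℝ (2 * k) →ₗ[ℝ] ℝ |
      ∀ x : homogeneousSubmodule (Fin n) ℝ (2 * k),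
        (x : MvPolynomial (Fin n) ℝ) ∈ I → L x = 0} = (W.dualAnnihilator : Set _) := by
    ext L
    simp only [Set.mem_setOf_eq, SetLike.mem_coe, Submodule.mem_dualAnnihilator]
    exact forall_congr' fun x => by rw [hWmem x]
  suffices h : Submodule.span ℝ (Cf n k f) = W.dualAnnihilator by
    rw [h, ← hset]
  apply le_antisymm
  · rw [Submodule.span_le]
    intro E hE
    rw [SetLike.mem_coe, Submodule.mem_dualAnnihilator]
    intro x hx
    exact Stmt9Aux.E_vanish hE hf x ((hWmem x).1 hx)
  · -- the hard direction
    intro L hL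
    set D : Set (Module.Dual ℝ (homogeneousSubmodule (Fin n) ℝ (2 * k) ⧸ W)) :=
      {φ | ∀ c ∈ sosImage n k I, 0 ≤ φ c} with hDdef
    have hD : Submodule.span ℝ D = ⊤ := by
      apply Stmt9Aux.span_dual_eq_top
      · exact ⟨0, ⟨0, Fin.elim0, fun i => i.elim0, by simp⟩, map_zero _⟩
      · rintro c hc x' ⟨x, ⟨N, p, hp, hx⟩, rfl⟩
        refine ⟨c • x, ⟨N, fun i => Real.sqrt c • p i, fun i => ?_, ?_⟩, map_smul _ c x⟩
        · show (Real.sqrt c • p i).IsHomogeneous k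
          rw [smul_eq_C_mul]
          exact (hp i).C_mul _
        · push_cast
          rw [hx, Finset.smul_sum]
          apply Finset.sum_congr rfl
          intro i _
          show c • p i ^ 2 = (Real.sqrt c • p i) ^ 2
          rw [smul_pow, Real.sq_sqrt hc.le]
      · rintro x' ⟨x, ⟨N, p, hp, hx⟩, rfl⟩ y' ⟨y, ⟨M, q, hq, hy⟩, rfl⟩
        refine ⟨x + y, ⟨N + M, Fin.append p q, fun i => ?_, ?_⟩, map_add _ x y⟩
        · refine Fin.addCases (fun j => ?_) (fun j => ?_) i
          · rw [Fin.append_left]; exact hp j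
          · rw [Fin.append_right]; exact hq j
        · push_cast
          rw [hx, hy, Fin.sum_univ_add]
          congr 1
          · exact Finset.sum_congr rfl fun j _ => by rw [Fin.append_left]
          · exact Finset.sum_congr rfl fun j _ => by rw [Fin.append_right]
      · exact hclosed
      · exact hpointed
    set e := W.dualQuotEquivDualAnnihilator with he
    set j : Module.Dual ℝ (homogeneousSubmodule (Fin n) ℝ (2 * k) ⧸ W) →ₗ[ℝ]
        (homogeneousSubmodule (Fin n) ℝ (2 * k) →ₗ[ℝ] ℝ) :=
      W.dualAnnihilator.subtype.comp e.toLinearMap with hj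
    have hjD : j '' D ⊆ Cf n k f := by
      rintro _ ⟨φ, hφ, rfl⟩
      constructor
      · intro h hh x hx
        have hxmem : W.mkQ x ∈ sosImage n k I := by
          refine ⟨x, ⟨1, fun _ => h, fun _ => hh, ?_⟩, rfl⟩
          rw [hx, Fin.sum_univ_one]
        have := hφ _ hxmem
        exact this
      · intro x hx
        have hxW : x ∈ W := (hWmem x).2 (hx ▸ hfI)
        have : W.mkQ x = 0 := (Submodule.Quotient.mk_eq_zero W).2 hxW
        show φ (W.mkQ x) = 0
        rw [this, map_zero]
    have hLj : L = j (e.symm ⟨L, hL⟩) := by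
      simp [hj, he]
    rw [hLj]
    have : e.symm ⟨L, hL⟩ ∈ Submodule.span ℝ D := by rw [hD]; trivial
    have hmem : j (e.symm ⟨L, hL⟩) ∈ Submodule.map j (Submodule.span ℝ D) :=
      Submodule.mem_map_of_mem this
    rw [Submodule.map_span] at hmem
    exact Submodule.span_mono hjD hmem
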